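/- Let G be a finite simple graph with T triangles and degeneracy at most κ (κ ≥ 1), and let ε > 0. Call an edge e ε-heavy if ε · t_e > κ. Then the number of triangles of G all three of whose edges are ε-heavy is at most 6·ε·T. -/

import Mathlib

open Finset

/-- The number of triangles (3-cliques) of `G` containing the edge `e`, i.e. `t_e`. -/
def edgeTri {V : Type*} [Fintype V] [DecidableEq V] (G : SimpleGraph V)
    [DecidableRel G.Adj] (e : Sym2 V) : ℕ :=
  ((G.cliqueFinset 3).filter (fun s => e ∈ s.sym2)).card

lemma peel {V : Type*} [Fintype V] [DecidableEq V] (G : SimpleGraph V) [DecidableRel G.Adj]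
    (κ : ℕ) (ε : ℝ)
    (hdeg : ∀ S : Finset V, S.Nonempty →
      ∃ v ∈ S, (S.filter (fun w => G.Adj v w)).card ≤ κ) (S : Finset V) :
    ((G.cliqueFinset 3).filter (fun s => s ⊆ S ∧ ∀ u ∈ s, ∀ v ∈ s, u ≠ v →
        (κ : ℝ) < ε * (edgeTri G s(u, v) : ℝ))).card
      ≤ κ * ((G.edgeFinset.filter (fun e => e ∈ S.sym2 ∧
          (κ : ℝ) < ε * (edgeTri G e : ℝ))).card) := by
  classical
  letI : LinearOrder V := LinearOrder.lift' (Fintype.equivFin V) (Fintype.equivFin V).injective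
  induction S using Finset.strongInduction with
  | _ S ih =>
    rcases S.eq_empty_or_nonempty with rfl | hS
    · have : ((G.cliqueFinset 3).filter (fun s => s ⊆ (∅ : Finset V) ∧ ∀ u ∈ s, ∀ v ∈ s, u ≠ v →
          (κ : ℝ) < ε * (edgeTri G s(u, v) : ℝ))) = ∅ := by
        apply Finset.filter_false_of_mem
        intro s hs ⟨h1, _⟩
        have := (SimpleGraph.mem_cliqueFinset_iff.mp hs).card_eq
        rw [Finset.subset_empty.mp h1] at this
        simp at this
      rw [this]; simp
    obtain ⟨v, hvS, hvdeg⟩ := hdeg S hS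
    set S' := S.erase v with hS'
    have hS'ss : S' ⊂ S := Finset.erase_ssubset hvS
    -- split the triangles by whether they contain v
    have tsplit :
        ((G.cliqueFinset 3).filter (fun s => s ⊆ S ∧ ∀ u ∈ s, ∀ v ∈ s, u ≠ v →
          (κ : ℝ) < ε * (edgeTri G s(u, v) : ℝ))).card
        = (((G.cliqueFinset 3).filter (fun s => s ⊆ S ∧ ∀ u ∈ s, ∀ v ∈ s, u ≠ v →
            (κ : ℝ) < ε * (edgeTri G s(u, v) : ℝ))).filter (fun s => v ∈ s)).card
          + ((G.cliqueFinset 3).filter (fun s => s ⊆ S' ∧ ∀ u ∈ s, ∀ v ∈ s, u ≠ v →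
            (κ : ℝ) < ε * (edgeTri G s(u, v) : ℝ))).card := by
      rw [← Finset.card_filter_add_card_filter_not (s :=
        ((G.cliqueFinset 3).filter (fun s => s ⊆ S ∧ ∀ u ∈ s, ∀ v ∈ s, u ≠ v →
          (κ : ℝ) < ε * (edgeTri G s(u, v) : ℝ)))) (fun s => v ∈ s)]
      congr 1
      rw [Finset.filter_filter]
      apply congrArg Finset.card
      apply Finset.filter_congr
      intro s _
      constructor
      · rintro ⟨⟨h1, h2⟩, h3⟩
        exact ⟨Finset.subset_erase.mpr ⟨h1, h3⟩, h2⟩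
      · rintro ⟨h1, h2⟩
        obtain ⟨h1, h3⟩ := Finset.subset_erase.mp h1
        exact ⟨⟨h1, h2⟩, h3⟩
    -- split the edges by whether they contain v
    have esplit :
        (G.edgeFinset.filter (fun e => e ∈ S.sym2 ∧
          (κ : ℝ) < ε * (edgeTri G e : ℝ))).card
        = ((G.edgeFinset.filter (fun e => (e ∈ S.sym2 ∧
            (κ : ℝ) < ε * (edgeTri G e : ℝ)) ∧ v ∈ e)).card)
          + (G.edgeFinset.filter (fun e => e ∈ S'.sym2 ∧
            (κ : ℝ) < ε * (edgeTri G e : ℝ))).card := by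
      rw [← Finset.card_filter_add_card_filter_not (s :=
        (G.edgeFinset.filter (fun e => e ∈ S.sym2 ∧
          (κ : ℝ) < ε * (edgeTri G e : ℝ)))) (fun e => v ∈ e)]
      congr 1
      · rw [Finset.filter_filter]
      rw [Finset.filter_filter]
      apply congrArg Finset.card
      apply Finset.filter_congr
      intro e _
      simp only [Finset.mem_sym2_iff]
      constructor
      · rintro ⟨⟨h1, h2⟩, h3⟩
        exact ⟨fun a ha => Finset.mem_erase.mpr ⟨fun h => h3 (h ▸ ha), h1 a ha⟩, h2⟩
      · rintro ⟨h1, h2⟩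
        refine ⟨⟨fun a ha => Finset.mem_of_mem_erase (h1 a ha), h2⟩, fun hv => ?_⟩
        exact (Finset.mem_erase.mp (h1 v hv)).1 rfl
    rw [tsplit, esplit, Nat.mul_add]
    refine Nat.add_le_add ?_ (ih S' hS'ss)
    -- the key injection bound for triangles containing v
    refine le_trans (Finset.card_le_card_of_injOn
      (fun s => (s(v, (WithTop.untopD v (s.erase v).min)), WithBot.unbotD v (s.erase v).max))
      (t := (G.edgeFinset.filter (fun e => (e ∈ S.sym2 ∧
          (κ : ℝ) < ε * (edgeTri G e : ℝ)) ∧ v ∈ e)) ×ˢ (S.filter (fun w => G.Adj v w)))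
      ?_ ?_) ?_
    · intro s hs
      simp only [Finset.mem_coe, Finset.mem_filter, SimpleGraph.mem_cliqueFinset_iff] at hs
      obtain ⟨⟨hclique, hsub, hH⟩, hv⟩ := hs
      have h3 : s.card = 3 := hclique.card_eq
      have he2 : (s.erase v).card = 2 := by rw [Finset.card_erase_of_mem hv, h3]
      have hne : (s.erase v).Nonempty := by rw [← Finset.card_pos, he2]; norm_num
      have hmin : WithTop.untopD v (s.erase v).min = (s.erase v).min' hne := by
        rw [← Finset.coe_min' hne]; rfl
      have hmax : WithBot.unbotD v (s.erase v).max = (s.erase v).max' hne := by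
        rw [← Finset.coe_max' hne]; rfl
      set m := (s.erase v).min' hne with hm
      set M := (s.erase v).max' hne with hM
      have hmem : m ∈ s.erase v := Finset.min'_mem _ _
      have hMem : M ∈ s.erase v := Finset.max'_mem _ _
      have hmv : m ≠ v := Finset.ne_of_mem_erase hmem
      have hMv : M ≠ v := Finset.ne_of_mem_erase hMem
      have hms : m ∈ s := Finset.mem_of_mem_erase hmem
      have hMs : M ∈ s := Finset.mem_of_mem_erase hMem
      simp only [Finset.mem_coe, Finset.mem_product, hmin, hmax, Finset.mem_filter]
      refine ⟨⟨?_, ⟨?_, ?_⟩, ?_⟩, hsub hMs, ?_⟩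
      · rw [SimpleGraph.mem_edgeFinset]
        exact hclique.1 hv hms (fun h => hmv h.symm)
      · rw [Finset.mk_mem_sym2_iff]
        exact ⟨hvS, hsub hms⟩
      · exact hH v hv m hms (fun h => hmv h.symm)
      · exact Sym2.mem_mk_left _ _
      · exact hclique.1 hv hMs (fun h => hMv h.symm)
    · intro s₁ hs₁ s₂ hs₂ heq
      simp only [Finset.coe_filter, Set.mem_setOf_eq, Finset.mem_filter,
        SimpleGraph.mem_cliqueFinset_iff] at hs₁ hs₂
      obtain ⟨⟨hclique₁, hsub₁, hH₁⟩, hv₁⟩ := hs₁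
      obtain ⟨⟨hclique₂, hsub₂, hH₂⟩, hv₂⟩ := hs₂
      have he2₁ : (s₁.erase v).card = 2 := by
        rw [Finset.card_erase_of_mem hv₁, hclique₁.card_eq]
      have he2₂ : (s₂.erase v).card = 2 := by
        rw [Finset.card_erase_of_mem hv₂, hclique₂.card_eq]
      have hne₁ : (s₁.erase v).Nonempty := by rw [← Finset.card_pos, he2₁]; norm_num
      have hne₂ : (s₂.erase v).Nonempty := by rw [← Finset.card_pos, he2₂]; norm_num
      have hmin₁ : WithTop.untopD v (s₁.erase v).min = (s₁.erase v).min' hne₁ := by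
        rw [← Finset.coe_min' hne₁]; rfl
      have hmax₁ : WithBot.unbotD v (s₁.erase v).max = (s₁.erase v).max' hne₁ := by
        rw [← Finset.coe_max' hne₁]; rfl
      have hmin₂ : WithTop.untopD v (s₂.erase v).min = (s₂.erase v).min' hne₂ := by
        rw [← Finset.coe_min' hne₂]; rfl
      have hmax₂ : WithBot.unbotD v (s₂.erase v).max = (s₂.erase v).max' hne₂ := by
        rw [← Finset.coe_max' hne₂]; rfl
      simp only [Prod.mk.injEq, hmin₁, hmax₁, hmin₂, hmax₂] at heq
      obtain ⟨heqe, heqM⟩ := heq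
      have hmv₁ : (s₁.erase v).min' hne₁ ≠ v :=
        Finset.ne_of_mem_erase (Finset.min'_mem _ _)
      have heqm : (s₁.erase v).min' hne₁ = (s₂.erase v).min' hne₂ := by
        rw [Sym2.eq_iff] at heqe
        rcases heqe with ⟨_, h⟩ | ⟨_, h⟩
        · exact h
        · exact absurd h hmv₁
      have hmM₁ : (s₁.erase v).min' hne₁ < (s₁.erase v).max' hne₁ :=
        Finset.min'_lt_max'_of_card _ (by rw [he2₁]; norm_num)
      have hset₁ : ({(s₁.erase v).min' hne₁, (s₁.erase v).max' hne₁} : Finset V)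
          = s₁.erase v := by
        apply Finset.eq_of_subset_of_card_le
        · intro x hx
          rcases Finset.mem_insert.mp hx with rfl | hx
          · exact Finset.min'_mem _ _
          · rw [Finset.mem_singleton.mp hx]; exact Finset.max'_mem _ _
        · rw [he2₁, Finset.card_pair (ne_of_lt hmM₁)]
      have hmM₂ : (s₂.erase v).min' hne₂ < (s₂.erase v).max' hne₂ :=
        Finset.min'_lt_max'_of_card _ (by rw [he2₂]; norm_num)
      have hset₂ : ({(s₂.erase v).min' hne₂, (s₂.erase v).max' hne₂} : Finset V)
          = s₂.erase v := by
        apply Finset.eq_of_subset_of_card_le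
        · intro x hx
          rcases Finset.mem_insert.mp hx with rfl | hx
          · exact Finset.min'_mem _ _
          · rw [Finset.mem_singleton.mp hx]; exact Finset.max'_mem _ _
        · rw [he2₂, Finset.card_pair (ne_of_lt hmM₂)]
      have : s₁.erase v = s₂.erase v := by
        rw [← hset₁, ← hset₂, heqm, heqM]
      calc s₁ = insert v (s₁.erase v) := (Finset.insert_erase hv₁).symm
        _ = insert v (s₂.erase v) := by rw [this]
        _ = s₂ := Finset.insert_erase hv₂
    · rw [Finset.card_product, Nat.mul_comm]
      exact Nat.mul_le_mul_right _ hvdeg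

/-- Let `G` have `T` triangles and degeneracy at most `κ ≥ 1`, and let `ε > 0`.
An edge `e` is `ε`-heavy if `ε * t_e > κ`.  Then the number of triangles of `G`
all three of whose edges are `ε`-heavy is at most `6 * ε * T`. -/
theorem heavy_triangles_le
    {V : Type*} [Fintype V] [DecidableEq V] (G : SimpleGraph V) [DecidableRel G.Adj]
    (κ : ℕ) (hκ : 1 ≤ κ) (ε : ℝ) (hε : 0 < ε)
    (hdeg : ∀ S : Finset V, S.Nonempty →
      ∃ v ∈ S, (S.filter (fun w => G.Adj v w)).card ≤ κ) :
    (((G.cliqueFinset 3).filter (fun s => ∀ u ∈ s, ∀ v ∈ s, u ≠ v →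
        (κ : ℝ) < ε * (edgeTri G s(u, v) : ℝ))).card : ℝ)
      ≤ 6 * ε * ((G.cliqueFinset 3).card : ℝ) := by
  classical
  set T := G.cliqueFinset 3 with hT
  set Eh := G.edgeFinset.filter (fun e => (κ : ℝ) < ε * (edgeTri G e : ℝ)) with hEh
  -- Step 1 : the peeling bound with S = univ
  have hpeel := peel G κ ε hdeg Finset.univ
  have huT : (T.filter (fun s => s ⊆ Finset.univ ∧ ∀ u ∈ s, ∀ v ∈ s, u ≠ v →
      (κ : ℝ) < ε * (edgeTri G s(u, v) : ℝ)))
      = T.filter (fun s => ∀ u ∈ s, ∀ v ∈ s, u ≠ v →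
      (κ : ℝ) < ε * (edgeTri G s(u, v) : ℝ)) := by
    apply Finset.filter_congr
    intro s _
    simp [Finset.subset_univ]
  have huE : (G.edgeFinset.filter (fun e => e ∈ (Finset.univ : Finset V).sym2 ∧
      (κ : ℝ) < ε * (edgeTri G e : ℝ))) = Eh := by
    apply Finset.filter_congr
    intro e _
    simp [Finset.mem_sym2_iff]
  rw [huT, huE] at hpeel
  -- Step 2 : double counting, ∑_{e ∈ Eh} t_e ≤ 6 T
  have hper : ∀ s ∈ T, (Eh.filter (fun e => e ∈ s.sym2)).card ≤ 6 := by
    intro s hs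
    have hsub : Eh.filter (fun e => e ∈ s.sym2) ⊆ s.sym2 :=
      fun e he => (Finset.mem_filter.mp he).2
    calc (Eh.filter (fun e => e ∈ s.sym2)).card ≤ s.sym2.card :=
          Finset.card_le_card hsub
      _ = 6 := by
          rw [Finset.card_sym2, (SimpleGraph.mem_cliqueFinset_iff.mp hs).card_eq]
          decide
  have hsum : ∑ e ∈ Eh, edgeTri G e ≤ 6 * T.card := by
    show ∑ e ∈ Eh, (T.filter (fun s => e ∈ s.sym2)).card ≤ 6 * T.card
    calc ∑ e ∈ Eh, (T.filter (fun s => e ∈ s.sym2)).card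
        = ∑ s ∈ T, (Eh.filter (fun e => e ∈ s.sym2)).card := by
          simp_rw [Finset.card_filter]
          exact Finset.sum_comm
      _ ≤ ∑ _s ∈ T, 6 := Finset.sum_le_sum hper
      _ = 6 * T.card := by rw [Finset.sum_const, smul_eq_mul, mul_comm]
  -- Step 3 : each heavy edge carries more than κ/ε triangles
  have h2 : (Eh.card : ℝ) * κ ≤ ε * (6 * T.card) := by
    calc (Eh.card : ℝ) * κ = ∑ _e ∈ Eh, (κ : ℝ) := by
          rw [Finset.sum_const, nsmul_eq_mul]
      _ ≤ ∑ e ∈ Eh, ε * (edgeTri G e : ℝ) := by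
          apply Finset.sum_le_sum
          intro e he
          exact le_of_lt (Finset.mem_filter.mp he).2
      _ = ε * ((∑ e ∈ Eh, edgeTri G e : ℕ) : ℝ) := by
          rw [← Finset.mul_sum, Nat.cast_sum]
      _ ≤ ε * (6 * T.card) := by
          apply mul_le_mul_of_nonneg_left _ hε.le
          rw [show ((6 : ℝ) * T.card) = ((6 * T.card : ℕ) : ℝ) by push_cast; ring]
          exact_mod_cast hsum
  -- assemble
  have h1 : ((T.filter (fun s => ∀ u ∈ s, ∀ v ∈ s, u ≠ v →
      (κ : ℝ) < ε * (edgeTri G s(u, v) : ℝ))).card : ℝ) ≤ (κ : ℝ) * Eh.card := by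
    exact_mod_cast hpeel
  have hκ0 : (0 : ℝ) < κ := by exact_mod_cast hκ
  nlinarith [h1, h2]
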